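/- Let r_S, r_I ≥ 0, r_S + r_I > 1, and positive coefficients c_{S1}, c_{S2}, c_{I1}, c_{I2}. The portion of the level set {φ = 1} (for φ(x₁,x₂) = r_S/(1+c_{S1}x₁+c_{S2}x₂) + r_I/(1+c_{I1}x₁+c_{I2}x₂)) lying in the closed nonnegative quadrant is the graph of a strictly decreasing convex function x₂ = Φ(x₁) defined on [0, R₁], where R₁ is the intercept with the positive x₁-axis. -/

import Mathlib

lemma convex_div_aux (r t s a b : ℝ) (hr : 0 ≤ r) (ht : 0 < t) (hs : 0 < s)
    (ha : 0 ≤ a) (hb : 0 ≤ b) (hab : a + b = 1) :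
    r / (a * t + b * s) ≤ a * (r / t) + b * (r / s) := by
  have hb' : b = 1 - a := by linarith
  subst hb'
  have hd : 0 < a * t + (1 - a) * s := by
    rcases lt_or_eq_of_le ha with h | h
    · nlinarith [mul_pos h ht, mul_nonneg hb hs.le]
    · rw [← h]; nlinarith
  have h6 : 0 ≤ (r / t - r / s) * (s - t) := by
    have hts : 0 < t * s := mul_pos ht hs
    have h5 : (r / t - r / s) * (s - t) * (t * s) = r * (s - t) ^ 2 := by
      field_simp
    nlinarith [sq_nonneg (s - t), mul_nonneg hr (sq_nonneg (s - t))]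
  have expand : (a * (r / t) + (1 - a) * (r / s)) * (a * t + (1 - a) * s) - r
      = a * (1 - a) * ((r / t - r / s) * (s - t)) := by
    field_simp; ring
  rw [div_le_iff₀ hd, ← sub_nonneg, expand]
  exact mul_nonneg (mul_nonneg ha hb) h6

theorem isocline_is_graph_of_decreasing_convex_function
    (rS rI cS1 cS2 cI1 cI2 : ℝ)
    (hrS : 0 ≤ rS) (hrI : 0 ≤ rI) (hr : 1 < rS + rI)
    (hcS1 : 0 < cS1) (hcS2 : 0 < cS2) (hcI1 : 0 < cI1) (hcI2 : 0 < cI2)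
    (φ : ℝ → ℝ → ℝ)
    (hφ : ∀ x1 x2, φ x1 x2 =
      rS / (1 + cS1 * x1 + cS2 * x2) + rI / (1 + cI1 * x1 + cI2 * x2))
    (R1 : ℝ) (hR1pos : 0 < R1) (hR1 : φ R1 0 = 1) :
    ∃ Φ : ℝ → ℝ,
      StrictAntiOn Φ (Set.Icc 0 R1) ∧
      ConvexOn ℝ (Set.Icc 0 R1) Φ ∧
      ∀ x1 x2 : ℝ, 0 ≤ x1 → 0 ≤ x2 →
        (φ x1 x2 = 1 ↔ (x1 ∈ Set.Icc 0 R1 ∧ x2 = Φ x1)) := by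
  have hden1 : ∀ x1 x2 : ℝ, 0 ≤ x1 → 0 ≤ x2 → 0 < 1 + cS1 * x1 + cS2 * x2 := by
    intro x1 x2 h1 h2
    nlinarith [mul_nonneg hcS1.le h1, mul_nonneg hcS2.le h2]
  have hden2 : ∀ x1 x2 : ℝ, 0 ≤ x1 → 0 ≤ x2 → 0 < 1 + cI1 * x1 + cI2 * x2 := by
    intro x1 x2 h1 h2
    nlinarith [mul_nonneg hcI1.le h1, mul_nonneg hcI2.le h2]
  -- strict antitonicity of φ
  have key : ∀ x1 x2 y1 y2 : ℝ, 0 ≤ x1 → 0 ≤ x2 → x1 ≤ y1 → x2 ≤ y2 →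
      (x1 < y1 ∨ x2 < y2) → φ y1 y2 < φ x1 x2 := by
    intro x1 x2 y1 y2 hx1 hx2 h1 h2 hor
    have hd1x := hden1 x1 x2 hx1 hx2
    have hd2x := hden2 x1 x2 hx1 hx2
    have hd1 : 1 + cS1 * x1 + cS2 * x2 < 1 + cS1 * y1 + cS2 * y2 := by
      rcases hor with h | h
      · nlinarith [mul_nonneg hcS2.le (sub_nonneg.2 h2)]
      · nlinarith [mul_nonneg hcS1.le (sub_nonneg.2 h1)]
    have hd2 : 1 + cI1 * x1 + cI2 * x2 < 1 + cI1 * y1 + cI2 * y2 := by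
      rcases hor with h | h
      · nlinarith [mul_nonneg hcI2.le (sub_nonneg.2 h2)]
      · nlinarith [mul_nonneg hcI1.le (sub_nonneg.2 h1)]
    rw [hφ, hφ]
    rcases lt_or_ge 0 rS with hS | hS
    · have t1 := div_lt_div_of_pos_left hS hd1x hd1
      have t2 : rI / (1 + cI1 * y1 + cI2 * y2) ≤ rI / (1 + cI1 * x1 + cI2 * x2) := by
        gcongr
      linarith
    · have hrS0 : rS = 0 := le_antisymm hS hrS
      have hIpos : 0 < rI := by linarith
      have t2 := div_lt_div_of_pos_left hIpos hd2x hd2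
      have t1 : rS / (1 + cS1 * y1 + cS2 * y2) ≤ rS / (1 + cS1 * x1 + cS2 * x2) := by
        gcongr
      linarith
  have weak : ∀ x1 x2 y1 y2 : ℝ, 0 ≤ x1 → 0 ≤ x2 → x1 ≤ y1 → x2 ≤ y2 →
      φ y1 y2 ≤ φ x1 x2 := by
    intro x1 x2 y1 y2 hx1 hx2 h1 h2
    rcases eq_or_lt_of_le h1 with rfl | h
    · rcases eq_or_lt_of_le h2 with rfl | h'
      · exact le_refl _
      · exact (key x1 x2 x1 y2 hx1 hx2 le_rfl h2 (Or.inr h')).le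
    · exact (key x1 x2 y1 y2 hx1 hx2 h1 h2 (Or.inl h)).le
  -- uniqueness of the root in x2
  have uniq : ∀ x1 a b : ℝ, 0 ≤ x1 → 0 ≤ a → 0 ≤ b →
      φ x1 a = 1 → φ x1 b = 1 → a = b := by
    intro x1 a b h1 ha hb hfa hfb
    rcases lt_trichotomy a b with h | h | h
    · have := key x1 a x1 b h1 ha le_rfl h.le (Or.inr h)
      rw [hfa, hfb] at this; linarith
    · exact h
    · have := key x1 b x1 a h1 hb le_rfl h.le (Or.inr h)
      rw [hfa, hfb] at this; linarith
  -- existence of the root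
  have hex : ∀ t : ℝ, t ∈ Set.Icc 0 R1 → ∃ y : ℝ, 0 ≤ y ∧ φ t y = 1 := by
    intro t ht
    obtain ⟨ht0, htR⟩ := ht
    set M : ℝ := rS / cS2 + rI / cI2 + 1 with hM
    have hM1 : 1 ≤ M := by
      have : 0 ≤ rS / cS2 := div_nonneg hrS hcS2.le
      have : 0 ≤ rI / cI2 := div_nonneg hrI hcI2.le
      simp only [hM]; linarith
    have hMpos : 0 < M := by linarith
    -- φ t M < 1
    have hfM : φ t M < 1 := by
      rw [hφ]
      have hc2M : 0 < cS2 * M := mul_pos hcS2 hMpos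
      have hc2M' : 0 < cI2 * M := mul_pos hcI2 hMpos
      have hb1 : cS2 * M ≤ 1 + cS1 * t + cS2 * M := by nlinarith [mul_nonneg hcS1.le ht0]
      have hb2 : cI2 * M ≤ 1 + cI1 * t + cI2 * M := by nlinarith [mul_nonneg hcI1.le ht0]
      have t1 : rS / (1 + cS1 * t + cS2 * M) ≤ rS / (cS2 * M) := by gcongr
      have t2 : rI / (1 + cI1 * t + cI2 * M) ≤ rI / (cI2 * M) := by gcongr
      have e1 : rS / (cS2 * M) = (rS / cS2) / M := by rw [div_div]
      have e2 : rI / (cI2 * M) = (rI / cI2) / M := by rw [div_div]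
      have efin : (rS / cS2) / M + (rI / cI2) / M = (M - 1) / M := by
        rw [← add_div]; congr 1; simp only [hM]; ring
      have : (M - 1) / M < 1 := by
        rw [div_lt_one hMpos]; linarith
      linarith [t1, t2, e1 ▸ t1, e2 ▸ t2]
    -- φ t 0 ≥ 1
    have hf0 : 1 ≤ φ t 0 := by
      have := weak t 0 R1 0 ht0 le_rfl htR le_rfl
      rw [hR1] at this; linarith
    -- continuity
    have hcont : ContinuousOn (fun y => φ t y) (Set.Icc 0 M) := by
      have heq : (fun y => φ t y) =
          fun y => rS / (1 + cS1 * t + cS2 * y) + rI / (1 + cI1 * t + cI2 * y) :=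
        funext (hφ t)
      rw [heq]
      apply ContinuousOn.add
      · exact ContinuousOn.div (by fun_prop) (by fun_prop)
          (fun y hy => (hden1 t y ht0 hy.1).ne')
      · exact ContinuousOn.div (by fun_prop) (by fun_prop)
          (fun y hy => (hden2 t y ht0 hy.1).ne')
    have hmem : (1 : ℝ) ∈ Set.Icc (φ t M) (φ t 0) := ⟨hfM.le, hf0⟩
    obtain ⟨y, hy, hyy⟩ := intermediate_value_Icc' (by linarith : (0:ℝ) ≤ M) hcont hmem
    exact ⟨y, hy.1, hyy⟩
  -- define Φ
  have hex' : ∀ t : ℝ, ∃ y : ℝ, 0 ≤ y ∧ (t ∈ Set.Icc 0 R1 → φ t y = 1) := by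
    intro t
    by_cases ht : t ∈ Set.Icc 0 R1
    · obtain ⟨y, hy1, hy2⟩ := hex t ht
      exact ⟨y, hy1, fun _ => hy2⟩
    · exact ⟨0, le_rfl, fun h => absurd h ht⟩
  choose Φ hΦ0 hΦ1 using hex'
  refine ⟨Φ, ?_, ?_, ?_⟩
  · -- StrictAntiOn
    intro x hx y hy hxy
    have h1 : φ y (Φ x) < 1 := by
      have := key x (Φ x) y (Φ x) hx.1 (hΦ0 x) hxy.le le_rfl (Or.inl hxy)
      rw [hΦ1 x hx] at this; exact this
    by_contra hcon
    push_neg at hcon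
    have h2 : φ y (Φ y) ≤ φ y (Φ x) :=
      weak y (Φ x) y (Φ y) hy.1 (hΦ0 x) le_rfl hcon
    rw [hΦ1 y hy] at h2
    linarith
  · -- ConvexOn
    refine ⟨convex_Icc 0 R1, ?_⟩
    intro x hx y hy a b ha hb hab
    simp only [smul_eq_mul]
    set z : ℝ := a * x + b * y with hz
    have hzmem : z ∈ Set.Icc 0 R1 := (convex_Icc (0:ℝ) R1) hx hy ha hb hab
    have hw0 : 0 ≤ a * Φ x + b * Φ y :=
      add_nonneg (mul_nonneg ha (hΦ0 x)) (mul_nonneg hb (hΦ0 y))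
    have hT1 := hden1 x (Φ x) hx.1 (hΦ0 x)
    have hT2 := hden2 x (Φ x) hx.1 (hΦ0 x)
    have hS1 := hden1 y (Φ y) hy.1 (hΦ0 y)
    have hS2 := hden2 y (Φ y) hy.1 (hΦ0 y)
    have hφz : φ z (a * Φ x + b * Φ y) ≤ 1 := by
      rw [hφ]
      have e1 : 1 + cS1 * z + cS2 * (a * Φ x + b * Φ y)
          = a * (1 + cS1 * x + cS2 * Φ x) + b * (1 + cS1 * y + cS2 * Φ y) := by
        simp only [hz]; linear_combination -hab
      have e2 : 1 + cI1 * z + cI2 * (a * Φ x + b * Φ y)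
          = a * (1 + cI1 * x + cI2 * Φ x) + b * (1 + cI1 * y + cI2 * Φ y) := by
        simp only [hz]; linear_combination -hab
      rw [e1, e2]
      have c1 := convex_div_aux rS _ _ a b hrS hT1 hS1 ha hb hab
      have c2 := convex_div_aux rI _ _ a b hrI hT2 hS2 ha hb hab
      have hx1 : φ x (Φ x) = 1 := hΦ1 x hx
      have hy1 : φ y (Φ y) = 1 := hΦ1 y hy
      rw [hφ] at hx1 hy1
      nlinarith [c1, c2]
    by_contra hcon
    push_neg at hcon
    have := key z (a * Φ x + b * Φ y) z (Φ z) hzmem.1 hw0 le_rfl hcon.le (Or.inr hcon)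
    rw [hΦ1 z hzmem] at this
    linarith
  · -- characterization
    intro x1 x2 hx1 hx2
    constructor
    · intro heq
      have hxR : x1 ≤ R1 := by
        by_contra hcon
        push_neg at hcon
        have := key R1 0 x1 x2 hR1pos.le le_rfl hcon.le hx2 (Or.inl hcon)
        rw [hR1, heq] at this; linarith
      have hmem : x1 ∈ Set.Icc 0 R1 := ⟨hx1, hxR⟩
      exact ⟨hmem, uniq x1 x2 (Φ x1) hx1 hx2 (hΦ0 x1) heq (hΦ1 x1 hmem)⟩
    · rintro ⟨hmem, rfl⟩
      exact hΦ1 x1 hmem
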